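/- Let F be L-smooth and μ-strongly convex with minimizer value F*, let η ≤ 1/(2L), and suppose at each round the update satisfies θ^{t+1} = θ^t − η∇F(θ^t) + e_t where the error e_t satisfies E[‖e_t‖ | θ^t] ≤ E₁ and E[‖e_t‖² | θ^t] ≤ E₂, and ‖∇F(θ^t)‖ ≤ C_g. Then E[F(θ^{t+1}) − F*] ≤ (1 − ημ) E[F(θ^t) − F*] + C_g E₁ + 2L E₂. -/

import Mathlib

set_option maxHeartbeats 1000000


open MeasureTheory

/-- Descent lemma for functions with Lipschitz gradient. -/
lemma descent_lemma {d : ℕ} (F : EuclideanSpace ℝ (Fin d) → ℝ)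
    (F' : EuclideanSpace ℝ (Fin d) → EuclideanSpace ℝ (Fin d))
    (L : ℝ) (hL : 0 ≤ L)
    (hgrad : ∀ θ, HasGradientAt F (F' θ) θ)
    (hlip : ∀ x y, ‖F' x - F' y‖ ≤ L * ‖x - y‖)
    (x y : EuclideanSpace ℝ (Fin d)) :
    F y ≤ F x + (inner ℝ (F' x) (y - x) : ℝ) + L / 2 * ‖y - x‖ ^ 2 := by
  set v := y - x with hv
  have hγ : ∀ t : ℝ, HasDerivAt (fun s : ℝ => x + s • v) v t := by
    intro t
    simpa using ((hasDerivAt_id t).smul_const v).const_add x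
  have hg : ∀ t : ℝ, HasDerivAt (fun s : ℝ => F (x + s • v))
      (inner ℝ (F' (x + t • v)) v : ℝ) t := by
    intro t
    have h1 := (hgrad (x + t • v)).hasFDerivAt
    have := h1.comp_hasDerivAt t (hγ t)
    simp [InnerProductSpace.toDual_apply_apply] at this
    exact this
  have hF'cont : Continuous F' := by
    have hlw : LipschitzWith (Real.toNNReal L) F' := by
      apply LipschitzWith.of_dist_le_mul
      intro a b
      simpa [dist_eq_norm, Real.coe_toNNReal L hL] using hlip a b
    exact hlw.continuous
  have hcont : Continuous fun t : ℝ => (inner ℝ (F' (x + t • v)) v : ℝ) := by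
    exact (hF'cont.comp (by continuity)).inner continuous_const
  have hFTC : F y - F x = ∫ t in (0:ℝ)..1, (inner ℝ (F' (x + t • v)) v : ℝ) := by
    have := intervalIntegral.integral_eq_sub_of_hasDerivAt
      (f := fun s : ℝ => F (x + s • v)) (a := 0) (b := 1)
      (fun t _ => hg t) (hcont.intervalIntegrable 0 1)
    simpa [hv] using this.symm
  have hmono : (∫ t in (0:ℝ)..1, (inner ℝ (F' (x + t • v)) v : ℝ))
      ≤ ∫ t in (0:ℝ)..1, ((inner ℝ (F' x) v : ℝ) + (L * ‖v‖ ^ 2) * t) := by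
    apply intervalIntegral.integral_mono_on (by norm_num)
      (hcont.intervalIntegrable 0 1)
      ((continuous_const.add (continuous_const.mul continuous_id)).intervalIntegrable 0 1)
    intro t ht
    rcases ht with ⟨ht0, ht1⟩
    simp only [Pi.add_apply, Pi.mul_apply, id_eq]
    have key : (inner ℝ (F' (x + t • v)) v : ℝ) - (inner ℝ (F' x) v : ℝ)
        = (inner ℝ (F' (x + t • v) - F' x) v : ℝ) := by
      rw [inner_sub_left]
    have h2 : (inner ℝ (F' (x + t • v) - F' x) v : ℝ) ≤ ‖F' (x + t • v) - F' x‖ * ‖v‖ :=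
      real_inner_le_norm _ _
    have h3 : ‖F' (x + t • v) - F' x‖ ≤ L * ‖t • v‖ := by
      simpa using hlip (x + t • v) x
    have h4 : ‖t • v‖ = t * ‖v‖ := by
      rw [norm_smul, Real.norm_eq_abs, abs_of_nonneg ht0]
    rw [h4] at h3
    nlinarith [key, h2, mul_le_mul_of_nonneg_right h3 (norm_nonneg v), norm_nonneg v]
  have hval : (∫ t in (0:ℝ)..1, ((inner ℝ (F' x) v : ℝ) + (L * ‖v‖ ^ 2) * t))
      = (inner ℝ (F' x) v : ℝ) + L / 2 * ‖v‖ ^ 2 := by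
    rw [intervalIntegral.integral_add (intervalIntegrable_const)
      ((intervalIntegral.intervalIntegrable_id).const_mul _)]
    rw [intervalIntegral.integral_const_mul]
    simp
    ring
  rw [hval] at hmono
  linarith [hFTC, hmono]

theorem one_round_descent
    {Ω : Type*} [MeasurableSpace Ω] (μP : Measure Ω) [IsProbabilityMeasure μP]
    {d : ℕ} (F : EuclideanSpace ℝ (Fin d) → ℝ)
    (F' : EuclideanSpace ℝ (Fin d) → EuclideanSpace ℝ (Fin d))
    (L μc η Cg E₁ E₂ Fstar : ℝ)
    (hL : 0 < L) (hμc : 0 < μc) (hη0 : 0 < η) (hη : η ≤ 1 / (2 * L))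
    (hgrad : ∀ θ, HasGradientAt F (F' θ) θ)
    (hlip : ∀ x y, ‖F' x - F' y‖ ≤ L * ‖x - y‖)
    (hsc : ∀ x y, F y ≥ F x + (inner ℝ (F' x) (y - x) : ℝ) + μc / 2 * ‖y - x‖ ^ 2)
    (θstar : EuclideanSpace ℝ (Fin d)) (hmin : ∀ θ, F θstar ≤ F θ)
    (hFstar : F θstar = Fstar)
    (θ : EuclideanSpace ℝ (Fin d)) (hCg : ‖F' θ‖ ≤ Cg)
    (e : Ω → EuclideanSpace ℝ (Fin d))
    (θ' : Ω → EuclideanSpace ℝ (Fin d))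
    (hstep : ∀ ω, θ' ω = θ - η • F' θ + e ω)
    (hInt1 : Integrable (fun ω => ‖e ω‖) μP)
    (hInt2 : Integrable (fun ω => ‖e ω‖ ^ 2) μP)
    (hIntF : Integrable (fun ω => F (θ' ω)) μP)
    (hE₁ : ∫ ω, ‖e ω‖ ∂μP ≤ E₁)
    (hE₂ : ∫ ω, ‖e ω‖ ^ 2 ∂μP ≤ E₂) :
    (∫ ω, F (θ' ω) ∂μP) - Fstar ≤ (1 - η * μc) * (F θ - Fstar) + Cg * E₁ + 2 * L * E₂ := by
  set g := F' θ with hg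
  clear_value g
  have hCg0 : (0:ℝ) ≤ Cg := le_trans (norm_nonneg _) hCg
  -- PL inequality
  have hPL : ‖g‖ ^ 2 ≥ 2 * μc * (F θ - Fstar) := by
    have h1 := hsc θ θstar
    rw [← hg] at h1
    have h2 : (inner ℝ g (θstar - θ) : ℝ) ≥ -(‖g‖ * ‖θstar - θ‖) := by
      have habs := abs_real_inner_le_norm g (θstar - θ)
      exact neg_le_of_neg_le (by linarith [neg_abs_le (inner ℝ g (θstar - θ) : ℝ)])
    nlinarith [sq_nonneg (‖g‖ - μc * ‖θstar - θ‖), hFstar, norm_nonneg (θstar - θ)]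
  -- pointwise bound
  have hpt : ∀ ω, F (θ' ω) - Fstar ≤ (1 - η * μc) * (F θ - Fstar) + Cg * ‖e ω‖ + 2 * L * ‖e ω‖ ^ 2 := by
    intro ω
    have hd := descent_lemma F F' L hL.le hgrad hlip θ (θ' ω)
    have hdiff : θ' ω - θ = -(η • g) + e ω := by
      rw [hstep ω]; abel
    have hinner : (inner ℝ g (θ' ω - θ) : ℝ) = -η * ‖g‖ ^ 2 + (inner ℝ g (e ω) : ℝ) := by
      rw [hdiff, inner_add_right, inner_neg_right, real_inner_smul_right,
        real_inner_self_eq_norm_sq]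
      ring
    have hie : (inner ℝ g (e ω) : ℝ) ≤ Cg * ‖e ω‖ := by
      calc (inner ℝ g (e ω) : ℝ) ≤ ‖g‖ * ‖e ω‖ := real_inner_le_norm _ _
        _ ≤ Cg * ‖e ω‖ := mul_le_mul_of_nonneg_right hCg (norm_nonneg _)
    have hnsq : ‖θ' ω - θ‖ ^ 2 ≤ 2 * η ^ 2 * ‖g‖ ^ 2 + 2 * ‖e ω‖ ^ 2 := by
      have htr : ‖θ' ω - θ‖ ≤ η * ‖g‖ + ‖e ω‖ := by
        rw [hdiff]
        calc ‖-(η • g) + e ω‖ ≤ ‖-(η • g)‖ + ‖e ω‖ := norm_add_le _ _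
          _ = η * ‖g‖ + ‖e ω‖ := by
            rw [norm_neg, norm_smul, Real.norm_eq_abs, abs_of_nonneg hη0.le]
      nlinarith [norm_nonneg (θ' ω - θ), norm_nonneg (e ω), norm_nonneg g,
        mul_nonneg (mul_nonneg hη0.le (norm_nonneg g)) (norm_nonneg (e ω)),
        sq_nonneg (η * ‖g‖ - ‖e ω‖)]
    have hLη : L * η ≤ 1 / 2 := by
      rw [le_div_iff₀ (by positivity)] at hη
      nlinarith
    rw [← hg] at hd
    -- combine
    have hg2 : (0:ℝ) ≤ ‖g‖ ^ 2 := sq_nonneg _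
    have h5 : L * η * (η * ‖g‖ ^ 2) ≤ 1 / 2 * (η * ‖g‖ ^ 2) :=
      mul_le_mul_of_nonneg_right hLη (mul_nonneg hη0.le hg2)
    have hcomb : F (θ' ω) ≤ F θ - η / 2 * ‖g‖ ^ 2 + Cg * ‖e ω‖ + 2 * L * ‖e ω‖ ^ 2 := by
      nlinarith [mul_le_mul_of_nonneg_left hnsq (by positivity : (0:ℝ) ≤ L / 2),
        mul_nonneg hL.le (sq_nonneg ‖e ω‖)]
    have h6 : η / 2 * (2 * μc * (F θ - Fstar)) ≤ η / 2 * ‖g‖ ^ 2 :=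
      mul_le_mul_of_nonneg_left hPL (by positivity)
    nlinarith [hcomb, h6]
  -- integrate
  have hIntRHS : Integrable (fun ω => ((1 - η * μc) * (F θ - Fstar) + Fstar) + Cg * ‖e ω‖ + 2 * L * ‖e ω‖ ^ 2) μP := by
    exact ((integrable_const _).add (hInt1.const_mul Cg)).add (hInt2.const_mul (2 * L))
  have hIineq := integral_mono hIntF hIntRHS (fun ω => by linarith [hpt ω])
  have hIval : ∫ ω, (((1 - η * μc) * (F θ - Fstar) + Fstar) + Cg * ‖e ω‖ + 2 * L * ‖e ω‖ ^ 2) ∂μP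
      = ((1 - η * μc) * (F θ - Fstar) + Fstar) + Cg * (∫ ω, ‖e ω‖ ∂μP) + 2 * L * (∫ ω, ‖e ω‖ ^ 2 ∂μP) := by
    have hA : Integrable (fun ω => ((1 - η * μc) * (F θ - Fstar) + Fstar) + Cg * ‖e ω‖) μP :=
      (integrable_const _).add (hInt1.const_mul Cg)
    have hB : Integrable (fun ω => (2 * L) * ‖e ω‖ ^ 2) μP := hInt2.const_mul (2 * L)
    rw [integral_add hA hB, integral_add (integrable_const _) (hInt1.const_mul Cg),
      integral_const, integral_const_mul, integral_const_mul]
    simp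
  rw [hIval] at hIineq
  have hE20 : (0:ℝ) ≤ ∫ ω, ‖e ω‖ ^ 2 ∂μP := integral_nonneg fun ω => sq_nonneg _
  nlinarith [mul_le_mul_of_nonneg_left hE₁ hCg0,
    mul_le_mul_of_nonneg_left hE₂ (by positivity : (0:ℝ) ≤ 2 * L)]
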